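/- arXiv:2204.09944 — 4 statements merged into one kernel-verified Lean document; each statement's English description precedes it below -/
import Mathlib

section
/- (Shisha–Mond) Let {Lₙ} be positive linear operators on C[a,b] with each Lₙ(1) bounded. Then for every f ∈ C[a,b] and every n, ‖f - Lₙ(f)‖_∞ ≤ ‖f‖_∞·‖Lₙ(1) - 1‖_∞ + ‖Lₙ(1) + 1‖_∞·ω(f, μₙ), where μₙ² = ‖Lₙ((t-x)²)(x)‖_∞ (the sup over x of Lₙ applied to t ↦ (t-x)² evaluated at x), provided μₙ > 0. -/
open Set

/-- Modulus of continuity of `f` on a set `S`. -/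
noncomputable def modulus (f : ℝ → ℝ) (S : Set ℝ) (δ : ℝ) : ℝ :=
  sSup {d : ℝ | ∃ x ∈ S, ∃ y ∈ S, |x - y| ≤ δ ∧ d = |f x - f y|}

/-- Sup-norm of `g` over a set `S`. -/
noncomputable def supN (S : Set ℝ) (g : ℝ → ℝ) : ℝ :=
  sSup ((fun x => |g x|) '' S)

/-- Shisha–Mond quantitative Korovkin theorem. -/
theorem shisha_mond (a b : ℝ) (hab : a < b)
    (L : ℕ → (ℝ → ℝ) →ₗ[ℝ] (ℝ → ℝ))
    (hpos : ∀ (n : ℕ) (g : ℝ → ℝ), (∀ t ∈ Icc a b, 0 ≤ g t) →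
      ∀ x ∈ Icc a b, 0 ≤ L n g x)
    (hbdd : ∀ n : ℕ, ∃ M : ℝ, ∀ x ∈ Icc a b, |L n (fun _ => 1) x| ≤ M)
    (f : ℝ → ℝ) (hf : ContinuousOn f (Icc a b))
    (n : ℕ) (μn : ℝ) (hμpos : 0 < μn)
    (hμ : μn ^ 2 = supN (Icc a b) (fun x => L n (fun t => (t - x) ^ 2) x)) :
    supN (Icc a b) (fun x => f x - L n f x) ≤
      supN (Icc a b) f * supN (Icc a b) (fun x => L n (fun _ => 1) x - 1)
        + supN (Icc a b) (fun x => L n (fun _ => 1) x + 1) *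
            modulus f (Icc a b) μn := by
  have hab' : a ≤ b := hab.le
  have haI : a ∈ Icc a b := ⟨le_rfl, hab'⟩
  obtain ⟨M, hM⟩ := isCompact_Icc.exists_bound_of_continuousOn hf
  simp only [Real.norm_eq_abs] at hM
  set ω := modulus f (Icc a b) μn with hωdef
  -- the modulus set
  have hSbdd : BddAbove {d : ℝ | ∃ x ∈ Icc a b, ∃ y ∈ Icc a b, |x - y| ≤ μn ∧ d = |f x - f y|} := by
    refine ⟨2 * M, ?_⟩
    rintro d ⟨x, hx, y, hy, -, rfl⟩
    have h1 := hM x hx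
    have h2 := hM y hy
    have := abs_sub_abs_le_abs_sub (f x) (f y)
    have := abs_add_le (f x) (-(f y))
    simp only [abs_neg] at this
    have : |f x - f y| ≤ |f x| + |f y| := by
      calc |f x - f y| = |f x + -(f y)| := by ring_nf
        _ ≤ |f x| + |-(f y)| := abs_add_le _ _
        _ = |f x| + |f y| := by rw [abs_neg]
    linarith
  have hmodle : ∀ u ∈ Icc a b, ∀ v ∈ Icc a b, |u - v| ≤ μn → |f u - f v| ≤ ω := by
    intro u hu v hv huv
    exact le_csSup hSbdd ⟨u, hu, v, hv, huv, rfl⟩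
  have hωnn : 0 ≤ ω := by
    have : (0 : ℝ) ≤ |f a - f a| := abs_nonneg _
    have h0 : |f a - f a| ≤ ω := hmodle a haI a haI (by simp [hμpos.le])
    simp at h0
    linarith [h0]
  -- telescoping lemma (ordered version)
  have htel : ∀ m : ℕ, ∀ u ∈ Icc a b, ∀ v ∈ Icc a b, u ≤ v → v - u ≤ m * μn →
      |f u - f v| ≤ m * ω := by
    intro m
    induction m with
    | zero =>
      intro u hu v hv huv hle
      have : u = v := le_antisymm huv (by simp at hle; linarith)
      simp [this]
    | succ m ih =>
      intro u hu v hv huv hle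
      by_cases hc : v - u ≤ μn
      · have h1 : |f u - f v| ≤ ω := hmodle u hu v hv (by rw [abs_sub_comm, abs_of_nonneg (by linarith)]; exact hc)
        have : (1 : ℝ) ≤ (m + 1 : ℕ) := by exact_mod_cast Nat.one_le_iff_ne_zero.2 (Nat.succ_ne_zero m)
        nlinarith
      · push_neg at hc
        set w := u + μn with hw
        have hwI : w ∈ Icc a b := ⟨by linarith [hu.1, hμpos.le], by linarith [hv.2]⟩
        have h1 : |f u - f w| ≤ ω := hmodle u hu w hwI (by rw [abs_sub_comm]; simp [hw, abs_of_nonneg hμpos.le])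
        have h2 : |f w - f v| ≤ m * ω := by
          refine ih w hwI v hv (by linarith) ?_
          have : (↑(m + 1) : ℝ) * μn = m * μn + μn := by push_cast; ring
          linarith [hle, this]
        calc |f u - f v| = |(f u - f w) + (f w - f v)| := by ring_nf
          _ ≤ |f u - f w| + |f w - f v| := abs_add_le _ _
          _ ≤ ω + m * ω := add_le_add h1 h2
          _ = (m + 1 : ℕ) * ω := by push_cast; ring
  have htel' : ∀ m : ℕ, ∀ u ∈ Icc a b, ∀ v ∈ Icc a b, |u - v| ≤ m * μn →
      |f u - f v| ≤ m * ω := by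
    intro m u hu v hv huv
    rcases le_total u v with h | h
    · exact htel m u hu v hv h (by rw [abs_sub_comm, abs_of_nonneg (by linarith)] at huv; exact huv)
    · rw [abs_sub_comm]
      exact htel m v hv u hu h (by rw [abs_of_nonneg (by linarith)] at huv; exact huv)
  -- key pointwise inequality
  have hkey : ∀ x ∈ Icc a b, ∀ t ∈ Icc a b,
      |f t - f x| ≤ ω * (1 + (t - x) ^ 2 / μn ^ 2) := by
    intro x hx t ht
    set r := |t - x| with hr
    have hrnn : 0 ≤ r := abs_nonneg _
    set m := ⌈r / μn⌉₊ with hm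
    have h1 : r ≤ m * μn := by
      have := Nat.le_ceil (r / μn)
      calc r = r / μn * μn := by field_simp
        _ ≤ m * μn := by apply mul_le_mul_of_nonneg_right this hμpos.le
    have h2 : |f t - f x| ≤ m * ω := htel' m t ht x hx h1
    have h3 : (m : ℝ) ≤ 1 + (t - x) ^ 2 / μn ^ 2 := by
      by_cases hc : r ≤ μn
      · have : (m : ℝ) ≤ 1 := by
          have : r / μn ≤ 1 := by rw [div_le_one hμpos]; exact hc
          exact_mod_cast Nat.ceil_le.2 (by exact_mod_cast this)
        have hsq : 0 ≤ (t - x) ^ 2 / μn ^ 2 := div_nonneg (sq_nonneg _) (sq_nonneg _)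
        linarith
      · push_neg at hc
        have hmlt : (m : ℝ) < r / μn + 1 := Nat.ceil_lt_add_one (div_nonneg hrnn hμpos.le)
        have hrr : r / μn ≤ r ^ 2 / μn ^ 2 := by
          rw [div_le_div_iff₀ hμpos (by positivity)]
          nlinarith [mul_nonneg (mul_nonneg hrnn hμpos.le) (sub_nonneg.2 hc.le)]
        have : (t - x) ^ 2 = r ^ 2 := (sq_abs _).symm
        rw [this]
        linarith
    calc |f t - f x| ≤ m * ω := h2
      _ ≤ (1 + (t - x) ^ 2 / μn ^ 2) * ω := mul_le_mul_of_nonneg_right h3 hωnn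
      _ = ω * (1 + (t - x) ^ 2 / μn ^ 2) := by ring
  -- monotonicity of L n
  have hmono : ∀ g h : ℝ → ℝ, (∀ t ∈ Icc a b, g t ≤ h t) → ∀ x ∈ Icc a b, L n g x ≤ L n h x := by
    intro g h hgh x hx
    have h0 := hpos n (h - g) (fun t ht => sub_nonneg.2 (hgh t ht)) x hx
    have heq : L n (h - g) = L n h - L n g := map_sub _ _ _
    rw [heq] at h0
    simpa [sub_nonneg] using h0
  -- main per-point bound
  obtain ⟨Mb, hMb⟩ := hbdd n
  have hNf_bdd : BddAbove ((fun x => |f x|) '' Icc a b) := ⟨M, by rintro d ⟨x, hx, rfl⟩; exact hM x hx⟩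
  have hN1_bdd : BddAbove ((fun x => |L n (fun _ => 1) x - 1|) '' Icc a b) := by
    refine ⟨Mb + 1, ?_⟩
    rintro d ⟨x, hx, rfl⟩
    have := hMb x hx
    calc |L n (fun _ => 1) x - 1| ≤ |L n (fun _ => 1) x| + |(1:ℝ)| := abs_sub _ _
      _ ≤ Mb + 1 := by simp; linarith
  have hN2_bdd : BddAbove ((fun x => |L n (fun _ => 1) x + 1|) '' Icc a b) := by
    refine ⟨Mb + 1, ?_⟩
    rintro d ⟨x, hx, rfl⟩
    have := hMb x hx
    calc |L n (fun _ => 1) x + 1| ≤ |L n (fun _ => 1) x| + |(1:ℝ)| := abs_add_le _ _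
      _ ≤ Mb + 1 := by simp; linarith
  set Nf := supN (Icc a b) f with hNf
  set N1 := supN (Icc a b) (fun x => L n (fun _ => 1) x - 1) with hN1
  set N2 := supN (Icc a b) (fun x => L n (fun _ => 1) x + 1) with hN2
  have hNfnn : 0 ≤ Nf := le_trans (abs_nonneg (f a)) (le_csSup hNf_bdd ⟨a, haI, rfl⟩)
  have hQbdd : BddAbove ((fun x => |L n (fun t => (t - x) ^ 2) x|) '' Icc a b) := by
    by_contra hnb
    have : supN (Icc a b) (fun x => L n (fun t => (t - x) ^ 2) x) = 0 :=
      Real.sSup_of_not_bddAbove hnb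
    rw [this] at hμ
    nlinarith
  have hpoint : ∀ x ∈ Icc a b, |f x - L n f x| ≤ Nf * N1 + N2 * ω := by
    intro x hx
    set A := L n (fun _ => (1:ℝ)) x with hA
    set Q := L n (fun t => (t - x) ^ 2) x with hQ
    have hAnn : 0 ≤ A := hpos n _ (fun t _ => zero_le_one) x hx
    have hQnn : 0 ≤ Q := hpos n _ (fun t _ => sq_nonneg _) x hx
    have hQle : Q ≤ μn ^ 2 := by
      have : Q ≤ supN (Icc a b) (fun x => L n (fun t => (t - x) ^ 2) x) := by
        refine le_trans (le_abs_self Q) (le_csSup hQbdd ⟨x, hx, rfl⟩)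
      linarith [hμ ▸ this]
    -- upper/lower bound functions
    set c := f x with hc
    have hup : ∀ t ∈ Icc a b, f t ≤ c + ω + ω / μn ^ 2 * (t - x) ^ 2 := by
      intro t ht
      have := hkey x hx t ht
      have h1 : f t - c ≤ ω * (1 + (t - x) ^ 2 / μn ^ 2) := le_trans (le_abs_self _) this
      have : ω * (1 + (t - x) ^ 2 / μn ^ 2) = ω + ω / μn ^ 2 * (t - x) ^ 2 := by
        field_simp
      linarith
    have hlo : ∀ t ∈ Icc a b, c - ω - ω / μn ^ 2 * (t - x) ^ 2 ≤ f t := by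
      intro t ht
      have := hkey x hx t ht
      have h1 : -(ω * (1 + (t - x) ^ 2 / μn ^ 2)) ≤ f t - c := neg_le_of_abs_le this |>.trans_eq rfl
      have : ω * (1 + (t - x) ^ 2 / μn ^ 2) = ω + ω / μn ^ 2 * (t - x) ^ 2 := by
        field_simp
      linarith
    -- compute L on the bound functions
    have hupfun : (fun t => c + ω + ω / μn ^ 2 * (t - x) ^ 2) =
        (c + ω) • ((fun _ => (1:ℝ)) : ℝ → ℝ) + (ω / μn ^ 2) • ((fun t => (t - x) ^ 2) : ℝ → ℝ) := by
      funext t; simp [Pi.add_apply, Pi.smul_apply, smul_eq_mul]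
    have hlofun : (fun t => c - ω - ω / μn ^ 2 * (t - x) ^ 2) =
        (c - ω) • ((fun _ => (1:ℝ)) : ℝ → ℝ) - (ω / μn ^ 2) • ((fun t => (t - x) ^ 2) : ℝ → ℝ) := by
      funext t; simp [Pi.sub_apply, Pi.smul_apply, smul_eq_mul]
    have hLup : L n (fun t => c + ω + ω / μn ^ 2 * (t - x) ^ 2) x
        = (c + ω) * A + (ω / μn ^ 2) * Q := by
      rw [hupfun, map_add, map_smul, map_smul]
      simp [Pi.add_apply, Pi.smul_apply, smul_eq_mul, hA, hQ]
    have hLlo : L n (fun t => c - ω - ω / μn ^ 2 * (t - x) ^ 2) x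
        = (c - ω) * A - (ω / μn ^ 2) * Q := by
      rw [hlofun, map_sub, map_smul, map_smul]
      simp [Pi.sub_apply, Pi.smul_apply, smul_eq_mul, hA, hQ]
    have hFup : L n f x ≤ (c + ω) * A + (ω / μn ^ 2) * Q := by
      rw [← hLup]; exact hmono f _ hup x hx
    have hFlo : (c - ω) * A - (ω / μn ^ 2) * Q ≤ L n f x := by
      rw [← hLlo]; exact hmono _ f hlo x hx
    have hQsmall : (ω / μn ^ 2) * Q ≤ ω := by
      have h1 : (ω / μn ^ 2) * Q ≤ (ω / μn ^ 2) * μn ^ 2 :=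
        mul_le_mul_of_nonneg_left hQle (div_nonneg hωnn (sq_nonneg _))
      have h2 : (ω / μn ^ 2) * μn ^ 2 = ω := by field_simp
      linarith
    have hQQnn : 0 ≤ (ω / μn ^ 2) * Q := mul_nonneg (div_nonneg hωnn (sq_nonneg _)) hQnn
    -- |f x - L n f x| ≤ |c| * |A - 1| + ω * (A + 1)
    have habs : |c - L n f x| ≤ |c| * |A - 1| + ω * (A + 1) := by
      have hca : c * (1 - A) ≤ |c| * |A - 1| := by
        calc c * (1 - A) ≤ |c * (1 - A)| := le_abs_self _
          _ = |c| * |1 - A| := abs_mul _ _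
          _ = |c| * |A - 1| := by rw [abs_sub_comm]
      have hca' : -(|c| * |A - 1|) ≤ c * (1 - A) := by
        have : c * (1 - A) ≥ -|c * (1 - A)| := neg_abs_le _
        calc -(|c| * |A - 1|) = -(|c| * |1 - A|) := by rw [abs_sub_comm]
          _ = -|c * (1 - A)| := by rw [abs_mul]
          _ ≤ c * (1 - A) := neg_abs_le _
      rw [abs_le]
      constructor
      · -- lower: c - L f x ≥ -(...)
        have : c - L n f x ≥ c - ((c + ω) * A + (ω / μn ^ 2) * Q) := by linarith
        have hexp : c - ((c + ω) * A + (ω / μn ^ 2) * Q) = c * (1 - A) - ω * A - (ω / μn ^ 2) * Q := by ring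
        nlinarith [mul_le_mul_of_nonneg_left (le_refl A) hωnn]
      · have : c - L n f x ≤ c - ((c - ω) * A - (ω / μn ^ 2) * Q) := by linarith
        have hexp : c - ((c - ω) * A - (ω / μn ^ 2) * Q) = c * (1 - A) + ω * A + (ω / μn ^ 2) * Q := by ring
        nlinarith
    -- now pass to sup norms
    have h1 : |c| ≤ Nf := le_csSup hNf_bdd ⟨x, hx, rfl⟩
    have h2 : |A - 1| ≤ N1 := le_csSup hN1_bdd ⟨x, hx, rfl⟩
    have h3 : A + 1 ≤ N2 := le_trans (le_abs_self _) (le_csSup hN2_bdd ⟨x, hx, rfl⟩)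
    have h4 : |c| * |A - 1| ≤ Nf * N1 :=
      mul_le_mul h1 h2 (abs_nonneg _) hNfnn
    have h5 : ω * (A + 1) ≤ N2 * ω := by
      have := mul_le_mul_of_nonneg_left h3 hωnn
      linarith [this]
    calc |f x - L n f x| = |c - L n f x| := rfl
      _ ≤ |c| * |A - 1| + ω * (A + 1) := habs
      _ ≤ Nf * N1 + N2 * ω := add_le_add h4 h5
  -- conclude
  have hRHSnn : 0 ≤ Nf * N1 + N2 * ω := le_trans (abs_nonneg _) (hpoint a haI)
  refine Real.sSup_le ?_ hRHSnn
  rintro d ⟨x, hx, rfl⟩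
  exact hpoint x hx
end

section
/- (Shisha–Mond, equal-one case) Let {Lₙ} be positive linear operators on C[a,b] with Lₙ(1) = 1. Then for every f ∈ C[a,b], ‖f - Lₙ(f)‖_∞ ≤ 2·ω(f, μₙ), where μₙ² = sup_{x∈[a,b]} Lₙ((t-x)²)(x), provided μₙ > 0. -/
open Set

lemma modulus_set_bddAbove (f : ℝ → ℝ) (a b δ : ℝ)
    (hf : ContinuousOn f (Icc a b)) :
    BddAbove {d : ℝ | ∃ x ∈ Icc a b, ∃ y ∈ Icc a b, |x - y| ≤ δ ∧ d = |f x - f y|} := by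
  obtain ⟨M, hM⟩ := isCompact_Icc.exists_bound_of_continuousOn hf
  refine ⟨2 * M, ?_⟩
  rintro d ⟨x, hx, y, hy, -, rfl⟩
  calc |f x - f y| ≤ |f x| + |f y| := abs_sub _ _
    _ ≤ M + M := add_le_add (hM x hx) (hM y hy)
    _ = 2 * M := by ring

lemma le_modulus (f : ℝ → ℝ) (a b δ : ℝ) (hf : ContinuousOn f (Icc a b))
    {x y : ℝ} (hx : x ∈ Icc a b) (hy : y ∈ Icc a b) (h : |x - y| ≤ δ) :
    |f x - f y| ≤ modulus f (Icc a b) δ :=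
  le_csSup (modulus_set_bddAbove f a b δ hf) ⟨x, hx, y, hy, h, rfl⟩

lemma modulus_nonneg (f : ℝ → ℝ) (a b δ : ℝ) (hab : a ≤ b) (hδ : 0 ≤ δ)
    (hf : ContinuousOn f (Icc a b)) : 0 ≤ modulus f (Icc a b) δ := by
  have : (0 : ℝ) ≤ |f a - f a| := abs_nonneg _
  have h := le_modulus f a b δ hf (left_mem_Icc.2 hab) (left_mem_Icc.2 hab)
    (by simpa using hδ)
  simpa using h

lemma chain_le (f : ℝ → ℝ) (a b δ : ℝ) (hδ : 0 < δ)
    (hf : ContinuousOn f (Icc a b)) :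
    ∀ m : ℕ, ∀ x ∈ Icc a b, ∀ y ∈ Icc a b, x ≤ y → y - x ≤ m * δ →
      |f x - f y| ≤ m * modulus f (Icc a b) δ := by
  intro m
  induction m with
  | zero =>
    intro x hx y hy hxy h
    norm_num at h
    have : x = y := le_antisymm hxy (by linarith)
    simp [this]
  | succ m ih =>
    intro x hx y hy hxy h
    set z := max x (y - m * δ) with hz
    have hxz : x ≤ z := le_max_left _ _
    have hzy : z ≤ y := by
      have h0 : (0:ℝ) ≤ (m : ℝ) * δ := by positivity
      exact max_le hxy (by linarith)
    have hzmem : z ∈ Icc a b := ⟨le_trans hx.1 hxz, le_trans hzy hy.2⟩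
    have h1 : |x - z| ≤ δ := by
      rw [abs_le]
      constructor
      · rcases max_cases x (y - m * δ) with ⟨he, -⟩ | ⟨he, -⟩
        · rw [hz, he]; linarith
        · rw [hz, he]; push_cast at h ⊢; linarith
      · linarith
    have h2 : y - z ≤ m * δ := by
      have : y - m * δ ≤ z := le_max_right _ _
      linarith
    calc |f x - f y| ≤ |f x - f z| + |f z - f y| := abs_sub_le _ _ _
      _ ≤ modulus f (Icc a b) δ + m * modulus f (Icc a b) δ :=
        add_le_add (le_modulus f a b δ hf hx hzmem h1) (ih z hzmem y hy hzy h2)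
      _ = (m + 1 : ℕ) * modulus f (Icc a b) δ := by push_cast; ring

lemma chain (f : ℝ → ℝ) (a b δ : ℝ) (hδ : 0 < δ)
    (hf : ContinuousOn f (Icc a b)) (m : ℕ) {x y : ℝ}
    (hx : x ∈ Icc a b) (hy : y ∈ Icc a b) (h : |x - y| ≤ m * δ) :
    |f x - f y| ≤ m * modulus f (Icc a b) δ := by
  rcases le_total x y with hxy | hxy
  · exact chain_le f a b δ hδ hf m x hx y hy hxy (by rw [abs_sub_comm, abs_of_nonneg (by linarith)] at h; exact h)
  · rw [abs_sub_comm]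
    exact chain_le f a b δ hδ hf m y hy x hx hxy (by rw [abs_of_nonneg (by linarith)] at h; exact h)

/-- pointwise bound : |f t - f x| ≤ ω + ω/μ² (t-x)². -/
lemma pointwise_bound (f : ℝ → ℝ) (a b μ : ℝ) (hab : a ≤ b) (hμ : 0 < μ)
    (hf : ContinuousOn f (Icc a b)) {x t : ℝ}
    (hx : x ∈ Icc a b) (ht : t ∈ Icc a b) :
    |f t - f x| ≤ modulus f (Icc a b) μ +
      modulus f (Icc a b) μ / μ ^ 2 * (t - x) ^ 2 := by
  set ω := modulus f (Icc a b) μ with hω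
  have hωnn : 0 ≤ ω := modulus_nonneg f a b μ hab hμ.le hf
  set r := |t - x| / μ with hr
  have hrnn : 0 ≤ r := by positivity
  set m := ⌈r⌉₊ with hm
  have hle : |t - x| ≤ m * μ := by
    have := Nat.le_ceil r
    calc |t - x| = r * μ := by rw [hr]; field_simp
      _ ≤ m * μ := by nlinarith [Nat.le_ceil r]
  have hchain : |f t - f x| ≤ m * ω := chain f a b μ hμ hf m ht hx hle
  have hr2 : r ^ 2 = (t - x) ^ 2 / μ ^ 2 := by
    rw [hr, div_pow, sq_abs]
  have key : (m : ℝ) * ω ≤ ω + ω / μ ^ 2 * (t - x) ^ 2 := by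
    have h2 : ω / μ ^ 2 * (t - x) ^ 2 = ω * r ^ 2 := by
      rw [hr2]; ring
    rw [h2]
    rcases le_or_gt (m : ℝ) 1 with hm1 | hm1
    · nlinarith
    · have hmr : (m : ℝ) - 1 ≤ r := by
        have := Nat.ceil_lt_add_one hrnn
        linarith
      have hm2 : (2 : ℕ) ≤ m := by exact_mod_cast Nat.one_lt_cast.mp (by exact_mod_cast hm1)
      have hm2' : (2 : ℝ) ≤ (m : ℝ) := by exact_mod_cast hm2
      have hr1 : 1 ≤ r := by linarith
      have hrr : r ≤ r ^ 2 := by nlinarith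
      nlinarith [mul_le_mul_of_nonneg_right hmr hωnn, mul_le_mul_of_nonneg_right hrr hωnn]
  linarith

/-- Shisha–Mond quantitative Korovkin theorem, case `Lₙ(1) = 1`. -/
theorem shisha_mond_normalized (a b : ℝ) (hab : a < b)
    (L : ℕ → (ℝ → ℝ) →ₗ[ℝ] (ℝ → ℝ))
    (hpos : ∀ (n : ℕ) (g : ℝ → ℝ), (∀ t ∈ Icc a b, 0 ≤ g t) →
      ∀ x ∈ Icc a b, 0 ≤ L n g x)
    (hone : ∀ n : ℕ, L n (fun _ => 1) = fun _ => 1)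
    (f : ℝ → ℝ) (hf : ContinuousOn f (Icc a b))
    (n : ℕ) (μn : ℝ) (hμpos : 0 < μn)
    (hμ : μn ^ 2 = sSup ((fun x => L n (fun t => (t - x) ^ 2) x) '' Icc a b)) :
    supN (Icc a b) (fun x => f x - L n f x) ≤ 2 * modulus f (Icc a b) μn := by
  set ω := modulus f (Icc a b) μn with hω
  have hωnn : 0 ≤ ω := modulus_nonneg f a b μn hab.le hμpos.le hf
  -- boundedness of the μ set
  have hSbdd : BddAbove ((fun x => L n (fun t => (t - x) ^ 2) x) '' Icc a b) := by
    by_contra hc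
    rw [Real.sSup_of_not_bddAbove hc] at hμ
    nlinarith
  have hq : ∀ x ∈ Icc a b, L n (fun t => (t - x) ^ 2) x ≤ μn ^ 2 := by
    intro x hx
    rw [hμ]
    exact le_csSup hSbdd ⟨x, hx, rfl⟩
  -- pointwise bound on |f x - L n f x|
  have main : ∀ x ∈ Icc a b, |f x - L n f x| ≤ 2 * ω := by
    intro x hx
    have hLq : 0 ≤ L n (fun t => (t - x) ^ 2) x :=
      hpos n _ (fun t _ => by positivity) x hx
    have hbound : ∀ (s : ℝ), s = 1 ∨ s = -1 →
        s * (f x - L n f x) ≤ 2 * ω := by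
      intro s hs
      set g : ℝ → ℝ := fun t => ω + ω / μn ^ 2 * (t - x) ^ 2 + s * (f t - f x) with hg
      have hgnn : ∀ t ∈ Icc a b, 0 ≤ g t := by
        intro t ht
        have hpb := pointwise_bound f a b μn hab.le hμpos hf hx ht
        have hsabs : |s * (f t - f x)| = |f t - f x| := by
          rcases hs with rfl | rfl
          · simp
          · rw [neg_one_mul, abs_neg]
        have := abs_le.1 (hsabs ▸ hpb : |s * (f t - f x)| ≤ ω + ω / μn ^ 2 * (t - x) ^ 2)
        simp only [hg]
        linarith [this.1]
      have hLg : 0 ≤ L n g x := hpos n g hgnn x hx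
      have hgdec : g = (ω - s * f x) • ((fun _ => (1:ℝ)) : ℝ → ℝ) +
          (ω / μn ^ 2) • ((fun t => (t - x) ^ 2) : ℝ → ℝ) + s • f := by
        funext t
        simp only [hg, Pi.add_apply, Pi.smul_apply, smul_eq_mul]
        ring
      have hLgx : L n g x = (ω - s * f x) + (ω / μn ^ 2) * L n (fun t => (t - x) ^ 2) x
          + s * L n f x := by
        rw [hgdec, map_add, map_add, map_smul, map_smul, map_smul, hone n]
        simp [smul_eq_mul]
      have hμb : (ω / μn ^ 2) * L n (fun t => (t - x) ^ 2) x ≤ ω := by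
        have h1 : (ω / μn ^ 2) * L n (fun t => (t - x) ^ 2) x ≤ (ω / μn ^ 2) * μn ^ 2 :=
          mul_le_mul_of_nonneg_left (hq x hx) (by positivity)
        have h2 : (ω / μn ^ 2) * μn ^ 2 = ω := by field_simp
        linarith
      rw [hLgx] at hLg
      nlinarith [hLg, hμb]
    rw [abs_le]
    constructor
    · have := hbound (-1) (Or.inr rfl); linarith
    · have := hbound 1 (Or.inl rfl); linarith
  -- conclude the sup bound
  apply Real.sSup_le
  · rintro d ⟨x, hx, rfl⟩
    exact main x hx
  · linarith
end

section
/- For the Kantorovich polynomials, the L¹ norm of the function x ↦ Kₙ((x − t)²)(x) on [0,1] equals 1/(6(n+1)); i.e., ∫₀¹ Kₙ((x − ·)²)(x) dx = 1/(6(n+1)). -/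
open Set MeasureTheory intervalIntegral

lemma beta_nat (b a : ℕ) :
    ∫ x in (0:ℝ)..1, x ^ a * (1 - x) ^ b
      = (a.factorial * b.factorial : ℝ) / (a + b + 1).factorial := by
  induction b generalizing a with
  | zero =>
    have hfa : (a.factorial : ℝ) ≠ 0 := by exact_mod_cast a.factorial_pos.ne'
    simp [integral_pow, Nat.factorial_succ]
    field_simp
  | succ b IH =>
    have hder : ∀ x ∈ uIcc (0:ℝ) 1, HasDerivAt (fun x : ℝ => x ^ (a+1) * (1 - x) ^ (b+1))
        (((a:ℝ)+1) * x ^ a * (1 - x) ^ (b+1) - ((b:ℝ)+1) * x ^ (a+1) * (1 - x) ^ b) x := by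
      intro x _
      have h1 : HasDerivAt (fun x : ℝ => x ^ (a+1)) (((a:ℝ)+1) * x ^ a) x := by
        simpa using hasDerivAt_pow (a+1) x
      have h2 : HasDerivAt (fun x : ℝ => (1 - x) ^ (b+1))
          (((b:ℝ)+1) * (1 - x) ^ b * (-1)) x := by
        have := ((hasDerivAt_id x).const_sub 1).pow (b+1)
        simpa [Pi.pow_def] using this
      have := h1.fun_mul h2
      refine this.congr_deriv ?_
      ring
    have hint : IntervalIntegrable
        (fun x : ℝ => ((a:ℝ)+1) * x ^ a * (1 - x) ^ (b+1) - ((b:ℝ)+1) * x ^ (a+1) * (1 - x) ^ b)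
        volume 0 1 := by
      apply Continuous.intervalIntegrable; continuity
    have key := integral_eq_sub_of_hasDerivAt hder hint
    simp only [one_pow, sub_self, zero_pow, mul_zero, zero_mul, ne_eq, Nat.succ_ne_zero,
      not_false_iff, one_mul, sub_zero] at key
    rw [integral_sub ((Continuous.intervalIntegrable (by continuity) _ _ : _))
        ((Continuous.intervalIntegrable (by continuity) _ _ : _))] at key
    have e1 : ∫ x in (0:ℝ)..1, ((a:ℝ)+1) * x ^ a * (1 - x) ^ (b+1)
        = ((a:ℝ)+1) * ∫ x in (0:ℝ)..1, x ^ a * (1 - x) ^ (b+1) := by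
      rw [← intervalIntegral.integral_const_mul]; congr 1; ext x; ring
    have e2 : ∫ x in (0:ℝ)..1, ((b:ℝ)+1) * x ^ (a+1) * (1 - x) ^ b
        = ((b:ℝ)+1) * ∫ x in (0:ℝ)..1, x ^ (a+1) * (1 - x) ^ b := by
      rw [← intervalIntegral.integral_const_mul]; congr 1; ext x; ring
    rw [e1, e2, IH (a+1), sub_eq_zero] at key
    have ha : ((a:ℝ)+1) ≠ 0 := by positivity
    have := key
    field_simp at this ⊢
    have harr : a + 1 + b + 1 = a + (b+1) + 1 := by ring
    rw [harr] at this
    push_cast [Nat.factorial_succ] at this ⊢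
    nlinarith [this, (Nat.cast_pos (α := ℝ)).mpr (Nat.factorial_pos (a + (b+1) + 1)),
      (Nat.cast_pos (α := ℝ)).mpr (Nat.factorial_pos a),
      (Nat.cast_pos (α := ℝ)).mpr (Nat.factorial_pos b)]

lemma sum1 (m : ℕ) : ∑ k ∈ Finset.range m, ((k:ℝ)+1)*((k:ℝ)+2)
    = (m:ℝ)*((m:ℝ)+1)*((m:ℝ)+2)/3 := by
  induction m with
  | zero => simp
  | succ m IH => rw [Finset.sum_range_succ, IH]; push_cast; ring

lemma sum2 (m : ℕ) : ∑ k ∈ Finset.range m, (2*(k:ℝ)+1)*((k:ℝ)+1)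
    = (m:ℝ)*((m:ℝ)+1)*(4*(m:ℝ)-1)/6 := by
  induction m with
  | zero => simp
  | succ m IH => rw [Finset.sum_range_succ, IH]; push_cast; ring

lemma sum3 (m : ℕ) : ∑ k ∈ Finset.range m, (3*(k:ℝ)^2+3*(k:ℝ)+1) = (m:ℝ)^3 := by
  induction m with
  | zero => simp
  | succ m IH => rw [Finset.sum_range_succ, IH]; push_cast; ring

/-- The Kantorovich polynomial operator. -/
noncomputable def K (n : ℕ) (f : ℝ → ℝ) (x : ℝ) : ℝ :=
  ((n : ℝ) + 1) * ∑ k ∈ Finset.range (n + 1),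
    (n.choose k : ℝ) * x ^ k * (1 - x) ^ (n - k) *
      ∫ t in ((k : ℝ) / ((n : ℝ) + 1))..(((k : ℝ) + 1) / ((n : ℝ) + 1)), f t

lemma iint (a b : ℕ) (c : ℝ) :
    IntervalIntegrable (fun x : ℝ => c * (x ^ a * (1 - x) ^ b)) volume 0 1 :=
  ((continuous_const.mul ((continuous_pow a).mul
    ((continuous_const.sub continuous_id).pow b)))).intervalIntegrable _ _

set_option maxHeartbeats 1000000 in
/-- The `L¹` norm of `x ↦ Kₙ((x−t)²)(x)` equals `1/(6(n+1))`. -/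
theorem kantorovich_second_moment_L1 (n : ℕ) (hn : 1 ≤ n) :
    ∫ x in (0:ℝ)..1, K n (fun t => (x - t) ^ 2) x = 1 / (6 * ((n : ℝ) + 1)) := by
  set N : ℝ := (n:ℝ) + 1 with hNdef
  have hN : N ≠ 0 := by positivity
  -- inner integral
  have hinner : ∀ (x a b : ℝ), (∫ t in a..b, (x - t)^2) = ((x-a)^3 - (x-b)^3)/3 := by
    intro x a b
    rw [intervalIntegral.integral_comp_sub_left (fun t => t^2) x, integral_pow]
    norm_num
  have hK : ∀ x : ℝ, K n (fun t => (x - t)^2) x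
      = N * ∑ k ∈ Finset.range (n + 1),
        (n.choose k : ℝ) * x ^ k * (1 - x) ^ (n - k) *
          (((x - (k:ℝ)/N)^3 - (x - ((k:ℝ)+1)/N)^3)/3) := by
    intro x
    rw [K]
    congr 1
    refine Finset.sum_congr rfl fun k _ => ?_
    rw [hinner]
  simp only [hK]
  rw [intervalIntegral.integral_const_mul]
  rw [intervalIntegral.integral_finset_sum (fun k _ => by
    apply Continuous.intervalIntegrable; continuity)]
  have hterm : ∀ k ∈ Finset.range (n + 1),
      (∫ x in (0:ℝ)..1, (n.choose k : ℝ) * x ^ k * (1 - x) ^ (n - k) *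
          (((x - (k:ℝ)/N)^3 - (x - ((k:ℝ)+1)/N)^3)/3))
      = (1/N) * ( ((k:ℝ)+1)*((k:ℝ)+2)/(((n:ℝ)+1)*((n:ℝ)+2)*((n:ℝ)+3))
          - (2*(k:ℝ)+1)*((k:ℝ)+1)/(((n:ℝ)+1)^2*((n:ℝ)+2))
          + (3*(k:ℝ)^2+3*(k:ℝ)+1)/(3*((n:ℝ)+1)^3) ) := by
    intro k hk
    rw [Finset.mem_range] at hk
    have hkn : k ≤ n := Nat.lt_succ_iff.mp hk
    have hptw : ∀ x : ℝ, (n.choose k : ℝ) * x ^ k * (1 - x) ^ (n - k) *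
          (((x - (k:ℝ)/N)^3 - (x - ((k:ℝ)+1)/N)^3)/3)
        = ((n.choose k : ℝ)/N) * (x ^ (k+2) * (1 - x) ^ (n - k))
          - ((n.choose k : ℝ)*(2*(k:ℝ)+1)/N^2) * (x ^ (k+1) * (1 - x) ^ (n - k))
          + ((n.choose k : ℝ)*(3*(k:ℝ)^2+3*(k:ℝ)+1)/(3*N^3)) * (x ^ k * (1 - x) ^ (n - k)) := by
      intro x
      have key : ((x - (k:ℝ)/N)^3 - (x - ((k:ℝ)+1)/N)^3)/3
          = x^2/N - x*(2*(k:ℝ)+1)/N^2 + (3*(k:ℝ)^2+3*(k:ℝ)+1)/(3*N^3) := by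
        field_simp
        ring
      rw [key]
      ring
    simp only [hptw]
    rw [intervalIntegral.integral_add, intervalIntegral.integral_sub, intervalIntegral.integral_const_mul,
      intervalIntegral.integral_const_mul, intervalIntegral.integral_const_mul, beta_nat, beta_nat, beta_nat]
    rotate_left
    · exact iint _ _ _
    · exact iint _ _ _
    · exact (iint _ _ _).sub (iint _ _ _)
    · exact iint _ _ _
    -- now pure arithmetic with factorials
    have e3 : k + 2 + (n - k) + 1 = n + 3 := by omega
    have e2 : k + 1 + (n - k) + 1 = n + 2 := by omega
    have e1 : k + (n - k) + 1 = n + 1 := by omega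
    rw [e3, e2, e1]
    have hc : (n.choose k : ℝ) = (n.factorial : ℝ) / (k.factorial * (n - k).factorial) :=
      Nat.cast_choose ℝ hkn
    have f3 : ((n+3).factorial : ℝ) = ((n:ℝ)+3)*((n:ℝ)+2)*((n:ℝ)+1)*(n.factorial:ℝ) := by
      push_cast [Nat.factorial_succ]; ring
    have f2 : ((n+2).factorial : ℝ) = ((n:ℝ)+2)*((n:ℝ)+1)*(n.factorial:ℝ) := by
      push_cast [Nat.factorial_succ]; ring
    have f1 : ((n+1).factorial : ℝ) = ((n:ℝ)+1)*(n.factorial:ℝ) := by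
      push_cast [Nat.factorial_succ]; ring
    have g2 : ((k+2).factorial : ℝ) = ((k:ℝ)+2)*((k:ℝ)+1)*(k.factorial:ℝ) := by
      push_cast [Nat.factorial_succ]; ring
    have g1 : ((k+1).factorial : ℝ) = ((k:ℝ)+1)*(k.factorial:ℝ) := by
      push_cast [Nat.factorial_succ]; ring
    rw [hc, f3, f2, f1, g2, g1]
    have hkf : (k.factorial : ℝ) ≠ 0 := by exact_mod_cast k.factorial_pos.ne'
    have hnkf : ((n-k).factorial : ℝ) ≠ 0 := by exact_mod_cast (n-k).factorial_pos.ne'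
    have hnf : (n.factorial : ℝ) ≠ 0 := by exact_mod_cast n.factorial_pos.ne'
    have h1 : ((n:ℝ)+1) ≠ 0 := by positivity
    have h2 : ((n:ℝ)+2) ≠ 0 := by positivity
    have h3 : ((n:ℝ)+3) ≠ 0 := by positivity
    rw [hNdef]
    field_simp
  rw [Finset.sum_congr rfl hterm]
  rw [← Finset.mul_sum]
  rw [Finset.sum_add_distrib, Finset.sum_sub_distrib, ← Finset.sum_div, ← Finset.sum_div,
    ← Finset.sum_div, sum1, sum2, sum3]
  have h1 : ((n:ℝ)+1) ≠ 0 := by positivity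
  have h2 : ((n:ℝ)+2) ≠ 0 := by positivity
  have h3 : ((n:ℝ)+3) ≠ 0 := by positivity
  rw [hNdef]
  push_cast
  field_simp
  ring
end

section
/- For every f ∈ C[0,1] and n ≥ 1, the Kantorovich polynomials satisfy ‖Kₙ(f) − f‖_{L¹[0,1]} ≤ 2·ω(f, 1/√(6(n+1))), where ω is the modulus of continuity of f. -/
open Set MeasureTheory

lemma mod_bdd {f : ℝ → ℝ} (hf : ContinuousOn f (Icc 0 1)) (δ : ℝ) :
    BddAbove {d : ℝ | ∃ x ∈ Icc (0:ℝ) 1, ∃ y ∈ Icc (0:ℝ) 1, |x - y| ≤ δ ∧ d = |f x - f y|} := by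
  obtain ⟨C, hC⟩ := isCompact_Icc.exists_bound_of_continuousOn hf
  simp only [Real.norm_eq_abs] at hC
  refine ⟨2*C, ?_⟩
  rintro d ⟨x, hx, y, hy, -, rfl⟩
  calc |f x - f y| ≤ |f x| + |f y| := abs_sub _ _
    _ ≤ C + C := add_le_add (hC x hx) (hC y hy)
    _ = 2*C := by ring

lemma mod_spec {f : ℝ → ℝ} (hf : ContinuousOn f (Icc 0 1)) {δ : ℝ} {x y : ℝ}
    (hx : x ∈ Icc (0:ℝ) 1) (hy : y ∈ Icc (0:ℝ) 1) (h : |x - y| ≤ δ) :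
    |f x - f y| ≤ modulus f (Icc 0 1) δ :=
  le_csSup (mod_bdd hf δ) ⟨x, hx, y, hy, h, rfl⟩

lemma mod_nonneg {f : ℝ → ℝ} (hf : ContinuousOn f (Icc 0 1)) {δ : ℝ} (hδ : 0 < δ) :
    0 ≤ modulus f (Icc 0 1) δ := by
  have := mod_spec hf (δ := δ) (x := 0) (y := 0) (left_mem_Icc.2 one_pos.le)
    (left_mem_Icc.2 one_pos.le) (by simp [hδ.le])
  exact (abs_nonneg _).trans this

lemma mod_chain {f : ℝ → ℝ} (hf : ContinuousOn f (Icc 0 1)) {δ : ℝ} (hδ : 0 < δ) :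
    ∀ (m : ℕ) (x y : ℝ), x ∈ Icc (0:ℝ) 1 → y ∈ Icc (0:ℝ) 1 →
    |x - y| ≤ m * δ → |f x - f y| ≤ m * modulus f (Icc 0 1) δ := by
  intro m
  induction m with
  | zero =>
    intro x y hx hy h
    simp only [Nat.cast_zero, zero_mul] at h ⊢
    have hxy : |x - y| = 0 := le_antisymm h (abs_nonneg _)
    have : x = y := sub_eq_zero.mp (abs_eq_zero.mp hxy)
    simp [this]
  | succ m ih =>
    intro x y hx hy h
    set z : ℝ := x + ((m:ℝ)/(m+1)) * (y - x) with hz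
    have hm1 : (0:ℝ) < m + 1 := by positivity
    have ht0 : (0:ℝ) ≤ (m:ℝ)/(m+1) := by positivity
    have ht1 : (m:ℝ)/(m+1) ≤ 1 := by rw [div_le_one hm1]; linarith
    have hzmem : z ∈ Icc (0:ℝ) 1 := by
      have h2 := (convex_Icc (0:ℝ) 1) hx hy (a := 1 - (m:ℝ)/(m+1)) (b := (m:ℝ)/(m+1))
        (by linarith) ht0 (by ring)
      simp only [smul_eq_mul] at h2
      have hzz : z = (1 - (m:ℝ)/(m+1)) * x + ((m:ℝ)/(m+1)) * y := by rw [hz]; ring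
      rwa [hzz]
    have hxz : |x - z| ≤ m * δ := by
      have hd : x - z = -(((m:ℝ)/(m+1)) * (y - x)) := by rw [hz]; ring
      rw [hd, abs_neg, abs_mul, abs_of_nonneg ht0, abs_sub_comm]
      calc (m:ℝ)/(m+1) * |x - y| ≤ (m:ℝ)/(m+1) * ((m+1) * δ) := by
            apply mul_le_mul_of_nonneg_left _ ht0
            push_cast at h; linarith
        _ = m * δ := by field_simp
    have hzy : |z - y| ≤ δ := by
      have hd : z - y = (1 - (m:ℝ)/(m+1)) * (x - y) := by rw [hz]; ring
      rw [hd, abs_mul, abs_of_nonneg (by linarith)]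
      have h1 : 1 - (m:ℝ)/(m+1) = 1/(m+1) := by field_simp; ring
      rw [h1]
      calc 1/((m:ℝ)+1) * |x - y| ≤ 1/((m:ℝ)+1) * ((m+1) * δ) := by
            apply mul_le_mul_of_nonneg_left _ (by positivity)
            push_cast at h; linarith
        _ = δ := by field_simp
    calc |f x - f y| ≤ |f x - f z| + |f z - f y| := abs_sub_le _ _ _
      _ ≤ m * modulus f (Icc 0 1) δ + modulus f (Icc 0 1) δ :=
          add_le_add (ih x z hx hzmem hxz) (mod_spec hf hzmem hy hzy)
      _ = (m+1 : ℕ) * modulus f (Icc 0 1) δ := by push_cast; ring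

lemma mod_quad {f : ℝ → ℝ} (hf : ContinuousOn f (Icc 0 1)) {δ : ℝ} (hδ : 0 < δ)
    {x y : ℝ} (hx : x ∈ Icc (0:ℝ) 1) (hy : y ∈ Icc (0:ℝ) 1) :
    |f x - f y| ≤ (1 + (x-y)^2/δ^2) * modulus f (Icc 0 1) δ := by
  set r : ℝ := |x - y| / δ with hr
  have hr0 : 0 ≤ r := by positivity
  have key : |x - y| ≤ (⌈r⌉₊ : ℝ) * δ := by
    rw [← div_le_iff₀ hδ]
    exact Nat.le_ceil r
  have h1 : |f x - f y| ≤ (⌈r⌉₊:ℝ) * modulus f (Icc 0 1) δ := mod_chain hf hδ _ x y hx hy key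
  have h2 : (⌈r⌉₊ : ℝ) ≤ 1 + r^2 := by
    rcases le_or_gt r 1 with hle | hgt
    · have : ⌈r⌉₊ ≤ 1 := Nat.ceil_le.2 (by simpa using hle)
      calc (⌈r⌉₊:ℝ) ≤ 1 := by exact_mod_cast this
        _ ≤ 1 + r^2 := by nlinarith
    · have : (⌈r⌉₊:ℝ) < r + 1 := Nat.ceil_lt_add_one hr0
      nlinarith
  have hrsq : r^2 = (x-y)^2/δ^2 := by rw [hr, div_pow, sq_abs]
  calc |f x - f y| ≤ (⌈r⌉₊:ℝ) * modulus f (Icc 0 1) δ := h1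
    _ ≤ (1 + r^2) * modulus f (Icc 0 1) δ :=
        mul_le_mul_of_nonneg_right h2 (mod_nonneg hf hδ)
    _ = (1 + (x-y)^2/δ^2) * modulus f (Icc 0 1) δ := by rw [hrsq]


lemma int_sq (a b x : ℝ) : ∫ t in a..b, (t-x)^2 = ((b-x)^3 - (a-x)^3)/3 := by
  have := intervalIntegral.integral_comp_sub_right (a := a) (b := b) (fun u => u^2) x
  rw [this, integral_pow]
  norm_num

lemma natmulsub_cast (k : ℕ) : ((k * (k-1) : ℕ) : ℝ) = (k:ℝ)*((k:ℝ)-1) := by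
  cases k with
  | zero => simp
  | succ m => push_cast [Nat.succ_sub_one]; ring

open Polynomial in
lemma sum_bern (n : ℕ) (x : ℝ) : ∑ k ∈ Finset.range (n+1), (n.choose k:ℝ)*x^k*(1-x)^(n-k) = 1 := by
  have := congrArg (Polynomial.eval x) (bernsteinPolynomial.sum ℝ n)
  simpa [bernsteinPolynomial, eval_finset_sum] using this

open Polynomial in
lemma sum_k_bern (n : ℕ) (x : ℝ) :
    ∑ k ∈ Finset.range (n+1), (k:ℝ) * ((n.choose k:ℝ)*x^k*(1-x)^(n-k)) = n*x := by
  have := congrArg (Polynomial.eval x) (bernsteinPolynomial.sum_smul ℝ n)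
  simpa [bernsteinPolynomial, eval_finset_sum, mul_assoc] using this

open Polynomial in
lemma sum_kk_bern (n : ℕ) (x : ℝ) :
    ∑ k ∈ Finset.range (n+1), (k:ℝ) * ((k:ℝ)-1) * ((n.choose k:ℝ)*x^k*(1-x)^(n-k))
      = (n:ℝ)*((n:ℝ)-1)*x^2 := by
  have := congrArg (Polynomial.eval x) (bernsteinPolynomial.sum_mul_smul ℝ n)
  simp only [bernsteinPolynomial, eval_finset_sum, eval_smul, eval_mul, eval_pow, eval_natCast,
    eval_X, eval_sub, eval_one, smul_eq_mul, nsmul_eq_mul] at this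
  rw [natmulsub_cast n] at this
  rw [← this]
  exact Finset.sum_congr rfl fun k _ => by rw [natmulsub_cast k]

lemma moment (n : ℕ) (x : ℝ) :
    ((n:ℝ)+1) * ∑ k ∈ Finset.range (n+1), (n.choose k:ℝ)*x^k*(1-x)^(n-k) *
      (∫ t in ((k:ℝ)/((n:ℝ)+1))..(((k:ℝ)+1)/((n:ℝ)+1)), (t-x)^2)
    = (((n:ℝ)-1)*x*(1-x) + 1/3) / ((n:ℝ)+1)^2 := by
  have hN : ((n:ℝ)+1) ≠ 0 := by positivity
  have key : ∀ k ∈ Finset.range (n+1),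
      (n.choose k:ℝ)*x^k*(1-x)^(n-k) *
        (∫ t in ((k:ℝ)/((n:ℝ)+1))..(((k:ℝ)+1)/((n:ℝ)+1)), (t-x)^2)
      = (1/((n:ℝ)+1)) * ( (1/((n:ℝ)+1)^2) * ((k:ℝ)*((k:ℝ)-1) * ((n.choose k:ℝ)*x^k*(1-x)^(n-k)))
        + (2/((n:ℝ)+1)^2 - 2*x/((n:ℝ)+1)) * ((k:ℝ) * ((n.choose k:ℝ)*x^k*(1-x)^(n-k)))
        + (x^2 - x/((n:ℝ)+1) + 1/(3*((n:ℝ)+1)^2)) * ((n.choose k:ℝ)*x^k*(1-x)^(n-k)) ) := by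
    intro k _
    rw [int_sq]
    field_simp
    ring
  rw [Finset.sum_congr rfl key]
  simp only [Finset.sum_add_distrib, ← Finset.mul_sum]
  rw [sum_kk_bern, sum_k_bern, sum_bern]
  field_simp
  ring

/-- Quantitative Korovkin estimate for Kantorovich polynomials in `L¹[0,1]`. -/
theorem kantorovich_L1_estimate (f : ℝ → ℝ) (hf : ContinuousOn f (Icc 0 1))
    (n : ℕ) (hn : 1 ≤ n) :
    ∫ x in (0:ℝ)..1, |K n f x - f x| ≤
      2 * modulus f (Icc 0 1) (1 / Real.sqrt (6 * ((n : ℝ) + 1))) := by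
  have hN : (0:ℝ) < (n:ℝ) + 1 := by positivity
  have hN' : ((n:ℝ) + 1) ≠ 0 := hN.ne'
  set δ : ℝ := 1 / Real.sqrt (6 * ((n:ℝ) + 1)) with hδdef
  have h6N : (0:ℝ) < 6 * ((n:ℝ)+1) := by positivity
  have hδpos : 0 < δ := by
    rw [hδdef]
    positivity
  have hδsq : δ^2 = 1/(6*((n:ℝ)+1)) := by
    rw [hδdef, div_pow, one_pow, Real.sq_sqrt h6N.le]
  set ω := modulus f (Icc 0 1) δ with hωdef
  have hω0 : 0 ≤ ω := mod_nonneg hf hδpos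
  -- interval endpoints
  have hab : ∀ k : ℕ, (k:ℝ)/((n:ℝ)+1) ≤ ((k:ℝ)+1)/((n:ℝ)+1) := fun k => by
    gcongr
    linarith
  have hsub : ∀ k ≤ n, Icc ((k:ℝ)/((n:ℝ)+1)) (((k:ℝ)+1)/((n:ℝ)+1)) ⊆ Icc (0:ℝ) 1 := by
    intro k hk
    apply Set.Icc_subset_Icc
    · positivity
    · rw [div_le_one hN]
      have : (k:ℝ) ≤ n := Nat.cast_le.2 hk
      linarith
  have hfint : ∀ k ≤ n, IntervalIntegrable f volume ((k:ℝ)/((n:ℝ)+1)) (((k:ℝ)+1)/((n:ℝ)+1)) :=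
    fun k hk => (hf.mono (by rw [uIcc_of_le (hab k)]; exact hsub k hk)).intervalIntegrable
  have hba : ∀ k : ℕ, ((k:ℝ)+1)/((n:ℝ)+1) - (k:ℝ)/((n:ℝ)+1) = 1/((n:ℝ)+1) := fun k => by
    field_simp
    ring
  -- the identity K n f x - f x = (n+1) * ∑ P k * ∫ (f t - f x)
  have hKid : ∀ x : ℝ, K n f x - f x = ((n:ℝ)+1) * ∑ k ∈ Finset.range (n+1),
      (n.choose k:ℝ)*x^k*(1-x)^(n-k) *
        ∫ t in ((k:ℝ)/((n:ℝ)+1))..(((k:ℝ)+1)/((n:ℝ)+1)), (f t - f x) := by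
    intro x
    have hsplit : ∀ k ∈ Finset.range (n+1),
        (n.choose k:ℝ)*x^k*(1-x)^(n-k) *
          (∫ t in ((k:ℝ)/((n:ℝ)+1))..(((k:ℝ)+1)/((n:ℝ)+1)), (f t - f x))
        = (n.choose k:ℝ)*x^k*(1-x)^(n-k) *
            (∫ t in ((k:ℝ)/((n:ℝ)+1))..(((k:ℝ)+1)/((n:ℝ)+1)), f t)
          - (1/((n:ℝ)+1)) * f x * ((n.choose k:ℝ)*x^k*(1-x)^(n-k)) := by
      intro k hk
      have hk' : k ≤ n := Nat.lt_succ_iff.mp (Finset.mem_range.mp hk)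
      rw [intervalIntegral.integral_sub (hfint k hk') intervalIntegrable_const,
        intervalIntegral.integral_const, hba k, smul_eq_mul]
      ring
    rw [Finset.sum_congr rfl hsplit, Finset.sum_sub_distrib, ← Finset.mul_sum, sum_bern, mul_one,
      mul_sub]
    have h3 : ((n:ℝ)+1) * ((1/((n:ℝ)+1)) * f x) = f x := by field_simp
    rw [h3, K]
  -- pointwise estimate
  have hpt : ∀ x ∈ Icc (0:ℝ) 1, |K n f x - f x| ≤
      ω + 6*((n:ℝ)+1) * ((((n:ℝ)-1)*x*(1-x) + 1/3)/((n:ℝ)+1)^2) * ω := by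
    intro x hx
    have hP : ∀ k : ℕ, 0 ≤ (n.choose k:ℝ)*x^k*(1-x)^(n-k) := fun k =>
      mul_nonneg (mul_nonneg (Nat.cast_nonneg _) (pow_nonneg hx.1 _))
        (pow_nonneg (by linarith [hx.2]) _)
    have habs_int : ∀ k ≤ n, IntervalIntegrable (fun t => |f t - f x|) volume
        ((k:ℝ)/((n:ℝ)+1)) (((k:ℝ)+1)/((n:ℝ)+1)) := by
      intro k hk
      apply ContinuousOn.intervalIntegrable
      rw [uIcc_of_le (hab k)]
      exact ((hf.mono (hsub k hk)).sub continuousOn_const).abs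
    -- per-interval bound
    have hk2 : ∀ k ≤ n, (∫ t in ((k:ℝ)/((n:ℝ)+1))..(((k:ℝ)+1)/((n:ℝ)+1)), |f t - f x|) ≤
        (1/((n:ℝ)+1)) * ω +
          (∫ t in ((k:ℝ)/((n:ℝ)+1))..(((k:ℝ)+1)/((n:ℝ)+1)), (t-x)^2) / δ^2 * ω := by
      intro k hk
      have hcont : Continuous fun t : ℝ => (1 + (t-x)^2/δ^2) * ω := by fun_prop
      have step : (∫ t in ((k:ℝ)/((n:ℝ)+1))..(((k:ℝ)+1)/((n:ℝ)+1)), |f t - f x|) ≤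
          ∫ t in ((k:ℝ)/((n:ℝ)+1))..(((k:ℝ)+1)/((n:ℝ)+1)), (1 + (t-x)^2/δ^2) * ω := by
        apply intervalIntegral.integral_mono_on (hab k) (habs_int k hk)
          (hcont.intervalIntegrable _ _)
        intro t ht
        exact mod_quad hf hδpos (hsub k hk ht) hx
      have heval : (∫ t in ((k:ℝ)/((n:ℝ)+1))..(((k:ℝ)+1)/((n:ℝ)+1)), (1 + (t-x)^2/δ^2) * ω)
          = (1/((n:ℝ)+1)) * ω +
            (∫ t in ((k:ℝ)/((n:ℝ)+1))..(((k:ℝ)+1)/((n:ℝ)+1)), (t-x)^2) / δ^2 * ω := by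
        rw [intervalIntegral.integral_mul_const,
          intervalIntegral.integral_add intervalIntegrable_const
            (Continuous.intervalIntegrable (by fun_prop) _ _),
          intervalIntegral.integral_const, intervalIntegral.integral_div, hba k, smul_eq_mul,
          mul_one]
        ring
      calc (∫ t in ((k:ℝ)/((n:ℝ)+1))..(((k:ℝ)+1)/((n:ℝ)+1)), |f t - f x|) ≤ _ := step
        _ = _ := heval
    -- sum up
    have hmain : |K n f x - f x| ≤ ((n:ℝ)+1) * ∑ k ∈ Finset.range (n+1),
        (n.choose k:ℝ)*x^k*(1-x)^(n-k) *
          ((1/((n:ℝ)+1)) * ω +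
            (∫ t in ((k:ℝ)/((n:ℝ)+1))..(((k:ℝ)+1)/((n:ℝ)+1)), (t-x)^2) / δ^2 * ω) := by
      rw [hKid x, abs_mul, abs_of_nonneg hN.le]
      apply mul_le_mul_of_nonneg_left _ hN.le
      calc |∑ k ∈ Finset.range (n+1), (n.choose k:ℝ)*x^k*(1-x)^(n-k) *
              ∫ t in ((k:ℝ)/((n:ℝ)+1))..(((k:ℝ)+1)/((n:ℝ)+1)), (f t - f x)|
          ≤ ∑ k ∈ Finset.range (n+1), |(n.choose k:ℝ)*x^k*(1-x)^(n-k) *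
              ∫ t in ((k:ℝ)/((n:ℝ)+1))..(((k:ℝ)+1)/((n:ℝ)+1)), (f t - f x)| :=
            Finset.abs_sum_le_sum_abs _ _
        _ ≤ _ := by
            apply Finset.sum_le_sum
            intro k hk
            have hk' : k ≤ n := Nat.lt_succ_iff.mp (Finset.mem_range.mp hk)
            rw [abs_mul, abs_of_nonneg (hP k)]
            apply mul_le_mul_of_nonneg_left _ (hP k)
            calc |∫ t in ((k:ℝ)/((n:ℝ)+1))..(((k:ℝ)+1)/((n:ℝ)+1)), (f t - f x)|
                ≤ ∫ t in ((k:ℝ)/((n:ℝ)+1))..(((k:ℝ)+1)/((n:ℝ)+1)), |f t - f x| :=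
                  intervalIntegral.abs_integral_le_integral_abs (hab k)
              _ ≤ _ := hk2 k hk'
    -- algebra
    have hdist : ∑ k ∈ Finset.range (n+1), (n.choose k:ℝ)*x^k*(1-x)^(n-k) *
        ((1/((n:ℝ)+1)) * ω +
          (∫ t in ((k:ℝ)/((n:ℝ)+1))..(((k:ℝ)+1)/((n:ℝ)+1)), (t-x)^2) / δ^2 * ω)
        = (1/((n:ℝ)+1)) * ω * ∑ k ∈ Finset.range (n+1), (n.choose k:ℝ)*x^k*(1-x)^(n-k)
          + (ω/δ^2) * ∑ k ∈ Finset.range (n+1), (n.choose k:ℝ)*x^k*(1-x)^(n-k) *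
              (∫ t in ((k:ℝ)/((n:ℝ)+1))..(((k:ℝ)+1)/((n:ℝ)+1)), (t-x)^2) := by
      rw [Finset.mul_sum, Finset.mul_sum, ← Finset.sum_add_distrib]
      apply Finset.sum_congr rfl
      intro k _
      ring
    rw [hdist, sum_bern, mul_one] at hmain
    have hmom := moment n x
    calc |K n f x - f x|
        ≤ ((n:ℝ)+1) * ((1/((n:ℝ)+1)) * ω + (ω/δ^2) * ∑ k ∈ Finset.range (n+1),
            (n.choose k:ℝ)*x^k*(1-x)^(n-k) *
              (∫ t in ((k:ℝ)/((n:ℝ)+1))..(((k:ℝ)+1)/((n:ℝ)+1)), (t-x)^2)) := hmain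
      _ = ω + (ω/δ^2) * ((((n:ℝ)-1)*x*(1-x) + 1/3)/((n:ℝ)+1)^2) := by
          rw [mul_add, ← mul_assoc ((n:ℝ)+1) (ω/δ^2), mul_comm ((n:ℝ)+1) (ω/δ^2),
            mul_assoc (ω/δ^2), hmom]
          congr 1
          field_simp
      _ = ω + 6*((n:ℝ)+1) * ((((n:ℝ)-1)*x*(1-x) + 1/3)/((n:ℝ)+1)^2) * ω := by
          rw [hδsq]
          field_simp
  -- integrate
  have hKcont : Continuous (K n f) := by
    unfold K
    exact continuous_const.mul (continuous_finset_sum _ fun k _ =>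
      ((continuous_const.mul (continuous_pow k)).mul
        ((continuous_const.sub continuous_id).pow _)).mul continuous_const)
  have hlhs_int : IntervalIntegrable (fun x => |K n f x - f x|) volume 0 1 := by
    apply ContinuousOn.intervalIntegrable
    rw [Set.uIcc_of_le (zero_le_one : (0:ℝ) ≤ 1)]
    exact ((hKcont.continuousOn.sub hf).abs)
  have hgcont : Continuous (fun x : ℝ =>
      ω + 6*((n:ℝ)+1) * ((((n:ℝ)-1)*x*(1-x) + 1/3)/((n:ℝ)+1)^2) * ω) := by fun_prop
  have hmono : (∫ x in (0:ℝ)..1, |K n f x - f x|) ≤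
      ∫ x in (0:ℝ)..1, (ω + 6*((n:ℝ)+1) * ((((n:ℝ)-1)*x*(1-x) + 1/3)/((n:ℝ)+1)^2) * ω) :=
    intervalIntegral.integral_mono_on zero_le_one hlhs_int (hgcont.intervalIntegrable _ _) hpt
  have hcompute : (∫ x in (0:ℝ)..1,
      (ω + 6*((n:ℝ)+1) * ((((n:ℝ)-1)*x*(1-x) + 1/3)/((n:ℝ)+1)^2) * ω)) = 2 * ω := by
    have hform : ∀ x : ℝ, ω + 6*((n:ℝ)+1) * ((((n:ℝ)-1)*x*(1-x) + 1/3)/((n:ℝ)+1)^2) * ω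
        = (ω + 2/((n:ℝ)+1)*ω) + (6*((n:ℝ)-1)/((n:ℝ)+1)*ω) * x
          + (-(6*((n:ℝ)-1)/((n:ℝ)+1)*ω)) * x^2 := by
      intro x
      field_simp
      ring
    simp only [hform]
    rw [intervalIntegral.integral_add (by apply Continuous.intervalIntegrable; fun_prop)
        (by apply Continuous.intervalIntegrable; fun_prop),
      intervalIntegral.integral_add (by apply Continuous.intervalIntegrable; fun_prop)
        (by apply Continuous.intervalIntegrable; fun_prop),
      intervalIntegral.integral_const, intervalIntegral.integral_const_mul,
      intervalIntegral.integral_const_mul, integral_id, integral_pow]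
    push_cast
    field_simp
    ring_nf
    have h1n : (1 + (n:ℝ)) ≠ 0 := by positivity
    field_simp
    ring
  calc (∫ x in (0:ℝ)..1, |K n f x - f x|) ≤ _ := hmono
    _ = 2 * ω := hcompute
end
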